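/- Let X be a compact metric space, E a real normed vector space, M ⊆ E a compact subset, U ⊆ E an open set with M ⊆ U, and π : U → M a Lipschitz retraction, i.e., π is Lipschitz and π(p) = p for every p ∈ M. Then for every continuous map f : X → M and every ε > 0 there exists a Lipschitz map g : X → M such that sup_{x ∈ X} ‖f(x) − g(x)‖ < ε. -/

import Mathlib

/-- Let `X` be a compact metric space, `E` a real normed vector space,
`M ⊆ E` compact, `U ⊆ E` open with `M ⊆ U`, and `retr : U → M` a Lipschitz retraction.
Then every continuous map `f : X → M` can be approximated, in the uniform distance,
by Lipschitz maps `g : X → M`. -/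
theorem lipschitz_approx_into_retract
    {X : Type*} [MetricSpace X] [CompactSpace X]
    {E : Type*} [NormedAddCommGroup E] [NormedSpace ℝ E]
    (M U : Set E) (hM : IsCompact M) (hU : IsOpen U) (hMU : M ⊆ U)
    (retr : E → E) (L : NNReal) (hretrLip : LipschitzOnWith L retr U)
    (hretrM : ∀ u ∈ U, retr u ∈ M) (hretr : ∀ p ∈ M, retr p = p)
    (f : X → E) (hf : Continuous f) (hfM : ∀ x, f x ∈ M)
    (ε : ℝ) (hε : 0 < ε) :
    ∃ g : X → E, (∃ K : NNReal, LipschitzWith K g) ∧ (∀ x, g x ∈ M) ∧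
      (⨆ x : X, ‖f x - g x‖) < ε := by
  rcases isEmpty_or_nonempty X with hX | hX
  · exact ⟨f, ⟨1, fun x => isEmptyElim x⟩, hfM, by rw [Real.iSup_of_isEmpty]; exact hε⟩
  -- thickening
  obtain ⟨δ, hδ, hδU⟩ := hM.exists_thickening_subset_open hU hMU
  have hL1 : (0:ℝ) < (L:ℝ) + 1 := by positivity
  set c : ℝ := min (δ/2) (ε/(2*((L:ℝ)+1))) with hcdef
  have hc0 : 0 < c := lt_min (by positivity) (by positivity)
  -- uniform continuity
  obtain ⟨r, hr0, hfr⟩ := Metric.uniformContinuous_iff.1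
    (CompactSpace.uniformContinuous_of_continuous hf) c hc0
  -- finite subcover
  have hcov : (Set.univ : Set X) ⊆ ⋃ i : X, Metric.ball i (r/2) := fun x _ =>
    Set.mem_iUnion.2 ⟨x, Metric.mem_ball_self (by positivity)⟩
  obtain ⟨t, ht⟩ := isCompact_univ.elim_finite_subcover
    (fun i : X => Metric.ball i (r/2)) (fun _ => Metric.isOpen_ball) hcov
  -- bump functions
  set φ : X → X → ℝ := fun i x => max (r - dist x i) 0 with hφdef
  have hφ0 : ∀ i x, 0 ≤ φ i x := fun i x => le_max_right _ _
  have hφr : ∀ i x, φ i x ≤ r := fun i x =>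
    max_le (by linarith [dist_nonneg (x := x) (y := i)]) hr0.le
  have hφlip : ∀ i x y, |φ i x - φ i y| ≤ dist x y := by
    intro i x y
    calc |φ i x - φ i y| ≤ |(r - dist x i) - (r - dist y i)| := abs_max_sub_max_le_abs _ _ _
      _ = |dist y i - dist x i| := by ring_nf
      _ ≤ dist y x := abs_dist_sub_le _ _ _
      _ = dist x y := dist_comm _ _
  set s : X → ℝ := fun x => ∑ i ∈ t, φ i x with hsdef
  have hs_lb : ∀ x, r/2 ≤ s x := by
    intro x
    obtain ⟨i, hit, hix⟩ := Set.mem_iUnion₂.1 (ht (Set.mem_univ x))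
    have h1 : r/2 ≤ φ i x := le_max_of_le_left (by
      have := Metric.mem_ball.1 hix; linarith)
    exact h1.trans (Finset.single_le_sum (fun j _ => hφ0 j x) hit)
  have hs_pos : ∀ x, 0 < s x := fun x => lt_of_lt_of_le (by positivity) (hs_lb x)
  have hs_lip : ∀ x y, |s x - s y| ≤ (t.card : ℝ) * dist x y := by
    intro x y
    calc |s x - s y| = |∑ i ∈ t, (φ i x - φ i y)| := by rw [Finset.sum_sub_distrib]
      _ ≤ ∑ i ∈ t, |φ i x - φ i y| := Finset.abs_sum_le_sum_abs _ _
      _ ≤ ∑ i ∈ t, dist x y := Finset.sum_le_sum fun i _ => hφlip i x y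
      _ = (t.card : ℝ) * dist x y := by rw [Finset.sum_const, nsmul_eq_mul]
  set V : X → E := fun x => ∑ i ∈ t, φ i x • f i with hVdef
  set BV : ℝ := ∑ i ∈ t, r * ‖f i‖ with hBVdef
  set KV : ℝ := ∑ i ∈ t, ‖f i‖ with hKVdef
  have hKV0 : 0 ≤ KV := Finset.sum_nonneg fun i _ => norm_nonneg _
  have hV_bd : ∀ x, ‖V x‖ ≤ BV := by
    intro x
    calc ‖V x‖ ≤ ∑ i ∈ t, ‖φ i x • f i‖ := norm_sum_le _ _
      _ ≤ ∑ i ∈ t, r * ‖f i‖ := Finset.sum_le_sum fun i _ => by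
          rw [norm_smul, Real.norm_eq_abs, abs_of_nonneg (hφ0 i x)]
          exact mul_le_mul_of_nonneg_right (hφr i x) (norm_nonneg _)
  have hV_lip : ∀ x y, ‖V x - V y‖ ≤ KV * dist x y := by
    intro x y
    calc ‖V x - V y‖ = ‖∑ i ∈ t, (φ i x - φ i y) • f i‖ := by
          simp only [sub_smul, Finset.sum_sub_distrib]; rfl
      _ ≤ ∑ i ∈ t, ‖(φ i x - φ i y) • f i‖ := norm_sum_le _ _
      _ ≤ ∑ i ∈ t, ‖f i‖ * dist x y := Finset.sum_le_sum fun i _ => by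
          rw [norm_smul, Real.norm_eq_abs, mul_comm]
          exact mul_le_mul_of_nonneg_left (hφlip i x y) (norm_nonneg _)
      _ = KV * dist x y := by rw [← Finset.sum_mul]
  set g' : X → E := fun x => (s x)⁻¹ • V x with hg'def
  -- error bound for g'
  have herr : ∀ x, ‖f x - g' x‖ ≤ c := by
    intro x
    have key : f x - g' x = (s x)⁻¹ • (∑ i ∈ t, φ i x • (f x - f i)) := by
      have : (s x)⁻¹ • (s x • f x) = f x := by
        rw [smul_smul, inv_mul_cancel₀ (hs_pos x).ne', one_smul]
      calc f x - g' x = (s x)⁻¹ • (s x • f x) - (s x)⁻¹ • V x := by rw [this]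
        _ = (s x)⁻¹ • (s x • f x - V x) := by rw [smul_sub]
        _ = (s x)⁻¹ • (∑ i ∈ t, φ i x • (f x - f i)) := by
            congr 1
            rw [hVdef, hsdef]
            simp only [Finset.sum_smul, ← Finset.sum_sub_distrib, smul_sub]
    rw [key, norm_smul, Real.norm_eq_abs, abs_of_pos (inv_pos.2 (hs_pos x))]
    have hsum : ‖∑ i ∈ t, φ i x • (f x - f i)‖ ≤ s x * c := by
      calc ‖∑ i ∈ t, φ i x • (f x - f i)‖ ≤ ∑ i ∈ t, ‖φ i x • (f x - f i)‖ := norm_sum_le _ _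
        _ ≤ ∑ i ∈ t, φ i x * c := Finset.sum_le_sum fun i _ => by
            rw [norm_smul, Real.norm_eq_abs, abs_of_nonneg (hφ0 i x)]
            rcases eq_or_lt_of_le (hφ0 i x) with h | h
            · rw [← h]; simp
            · have hdist : dist x i < r := by
                by_contra hge
                have : φ i x = 0 := max_eq_right (by push_neg at hge; linarith)
                rw [this] at h; exact lt_irrefl _ h
              have : dist (f x) (f i) < c := hfr hdist
              rw [dist_eq_norm] at this
              exact mul_le_mul_of_nonneg_left this.le (hφ0 i x)
        _ = s x * c := by rw [← Finset.sum_mul]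
    calc (s x)⁻¹ * ‖∑ i ∈ t, φ i x • (f x - f i)‖ ≤ (s x)⁻¹ * (s x * c) :=
          mul_le_mul_of_nonneg_left hsum (inv_pos.2 (hs_pos x)).le
      _ = c := by rw [← mul_assoc, inv_mul_cancel₀ (hs_pos x).ne', one_mul]
  -- g' lands in U
  have hg'U : ∀ x, g' x ∈ U := by
    intro x
    apply hδU
    rw [Metric.mem_thickening_iff]
    refine ⟨f x, hfM x, ?_⟩
    rw [dist_eq_norm, ← norm_neg, neg_sub]
    calc ‖f x - g' x‖ ≤ c := herr x
      _ ≤ δ/2 := min_le_left _ _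
      _ < δ := by linarith
  -- g' Lipschitz
  set Cg : ℝ := (2/r) * KV + (2/r)^2 * (t.card : ℝ) * BV with hCgdef
  have hg'_lip : ∀ x y, dist (g' x) (g' y) ≤ Cg * dist x y := by
    intro x y
    have h2r : ∀ z, (s z)⁻¹ ≤ 2/r := by
      intro z
      calc (s z)⁻¹ ≤ (r/2)⁻¹ := inv_anti₀ (by positivity) (hs_lb z)
        _ = 2/r := inv_div r 2
    have hinv : |(s x)⁻¹ - (s y)⁻¹| ≤ (2/r)^2 * ((t.card : ℝ) * dist x y) := by
      have h1 : (s x)⁻¹ - (s y)⁻¹ = (s y - s x) * ((s x)⁻¹ * (s y)⁻¹) := by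
        rw [inv_sub_inv (hs_pos x).ne' (hs_pos y).ne', div_eq_mul_inv, mul_inv]
      rw [h1, abs_mul, abs_mul]
      rw [abs_of_pos (inv_pos.2 (hs_pos x)), abs_of_pos (inv_pos.2 (hs_pos y))]
      have h2 : |s y - s x| ≤ (t.card : ℝ) * dist x y := by
        rw [abs_sub_comm]; exact hs_lip x y
      calc |s y - s x| * ((s x)⁻¹ * (s y)⁻¹) ≤ ((t.card : ℝ) * dist x y) * ((2/r) * (2/r)) := by
            apply mul_le_mul h2 (mul_le_mul (h2r x) (h2r y) (inv_pos.2 (hs_pos y)).le (by positivity)) (by positivity) (by positivity)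
        _ = (2/r)^2 * ((t.card : ℝ) * dist x y) := by ring
    rw [dist_eq_norm]
    calc ‖g' x - g' y‖ = ‖(s x)⁻¹ • (V x - V y) + ((s x)⁻¹ - (s y)⁻¹) • V y‖ := by
          rw [hg'def]; congr 1; rw [smul_sub, sub_smul]; abel
      _ ≤ ‖(s x)⁻¹ • (V x - V y)‖ + ‖((s x)⁻¹ - (s y)⁻¹) • V y‖ := norm_add_le _ _
      _ ≤ (2/r) * (KV * dist x y) + ((2/r)^2 * ((t.card : ℝ) * dist x y)) * BV := by
          apply add_le_add
          · rw [norm_smul, Real.norm_eq_abs, abs_of_pos (inv_pos.2 (hs_pos x))]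
            exact mul_le_mul (h2r x) (hV_lip x y) (norm_nonneg _) (by positivity)
          · rw [norm_smul, Real.norm_eq_abs]
            exact mul_le_mul hinv (hV_bd y) (norm_nonneg _) (by positivity)
      _ = Cg * dist x y := by rw [hCgdef]; ring
  -- final map
  refine ⟨fun x => retr (g' x), ?_, fun x => hretrM _ (hg'U x), ?_⟩
  · refine ⟨((L : ℝ) * Cg).toNNReal, LipschitzWith.of_dist_le_mul fun x y => ?_⟩
    have h1 : dist (retr (g' x)) (retr (g' y)) ≤ (L : ℝ) * dist (g' x) (g' y) :=
      lipschitzOnWith_iff_dist_le_mul.1 hretrLip _ (hg'U x) _ (hg'U y)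
    calc dist (retr (g' x)) (retr (g' y)) ≤ (L : ℝ) * (Cg * dist x y) :=
          h1.trans (mul_le_mul_of_nonneg_left (hg'_lip x y) L.2)
      _ = ((L : ℝ) * Cg) * dist x y := by ring
      _ ≤ (((L : ℝ) * Cg).toNNReal : ℝ) * dist x y :=
          mul_le_mul_of_nonneg_right (Real.le_coe_toNNReal _) dist_nonneg
  · have hbd : ∀ x, ‖f x - retr (g' x)‖ ≤ ε/2 := by
      intro x
      have h0 : f x - retr (g' x) = retr (f x) - retr (g' x) := by rw [hretr _ (hfM x)]
      rw [h0, ← dist_eq_norm]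
      have h1 : dist (retr (f x)) (retr (g' x)) ≤ (L : ℝ) * dist (f x) (g' x) :=
        lipschitzOnWith_iff_dist_le_mul.1 hretrLip _ (hMU (hfM x)) _ (hg'U x)
      have h2 : dist (f x) (g' x) ≤ c := by rw [dist_eq_norm]; exact herr x
      have h3 : c ≤ ε/(2*((L:ℝ)+1)) := min_le_right _ _
      calc dist (retr (f x)) (retr (g' x)) ≤ (L : ℝ) * c :=
            h1.trans (mul_le_mul_of_nonneg_left h2 L.2)
        _ ≤ ((L:ℝ)+1) * (ε/(2*((L:ℝ)+1))) :=
            mul_le_mul (by linarith) h3 hc0.le (by positivity)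
        _ = ε/2 := by field_simp
    calc (⨆ x : X, ‖f x - retr (g' x)‖) ≤ ε/2 := Real.iSup_le hbd (by positivity)
      _ < ε := by linarith
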